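/- Let M be a totally real number field that is Galois over ℚ, and let α ∈ 𝒪_M be such that σ(α) > 1 for every ring homomorphism σ : M → ℝ. Let I be a nonzero ideal of 𝒪_M with I ⊆ (2α + 1)²·𝒪_M. Then for every γ ∈ Gal(M/ℚ) one has |N_{M/ℚ}(α − γ(α))| ≤ absNorm(I). -/

import Mathlib

open NumberField

/-- From a complex embedding with all values real, build a real embedding. -/
noncomputable def realEmbOf {M : Type*} [Field M] (φ : M →+* ℂ)
    (h : ∀ y, (φ y).im = 0) : M →+* ℝ where
  toFun y := (φ y).re
  map_one' := by simp
  map_mul' x y := by simp [Complex.mul_re, h x, h y]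
  map_zero' := by simp
  map_add' x y := by simp [Complex.add_re]

lemma realEmbOf_spec {M : Type*} [Field M] (φ : M →+* ℂ)
    (h : ∀ y, (φ y).im = 0) (y : M) : (φ y : ℂ) = ((realEmbOf φ h y : ℝ) : ℂ) := by
  apply Complex.ext
  · rfl
  · simp [h y]

lemma abs_norm_eq_prod {M : Type*} [Field M] [NumberField M] (z : M) :
    ((|Algebra.norm ℚ z| : ℚ) : ℝ) = ∏ σ : M →ₐ[ℚ] ℂ, ‖σ z‖ := by
  have h := Algebra.norm_eq_prod_embeddings ℚ ℂ (x := z)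
  have h2 := congrArg (fun w : ℂ => ‖w‖) h
  rw [norm_prod] at h2
  rw [← h2]
  rw [show (algebraMap ℚ ℂ) ((Algebra.norm ℚ) z) = ((Algebra.norm ℚ z : ℚ) : ℂ) by
    simp [eq_ratCast]]
  rw [show ((Algebra.norm ℚ z : ℚ) : ℂ) = (((Algebra.norm ℚ z : ℚ) : ℝ) : ℂ) by push_cast; ring]
  rw [Complex.norm_real, Real.norm_eq_abs]
  push_cast
  rfl

theorem stmt_8 (M : Type*) [Field M] [NumberField M] [IsGalois ℚ M]
    (htr : ∀ (σ : M →+* ℂ) (y : M), (σ y).im = 0)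
    (α : 𝓞 M) (hα : ∀ σ : M →+* ℝ, 1 < σ (algebraMap (𝓞 M) M α))
    (I : Ideal (𝓞 M)) (hI : I ≠ ⊥)
    (hIα : I ≤ Ideal.span {(2 * α + 1) ^ 2})
    (γ : M ≃ₐ[ℚ] M) :
    |Algebra.norm ℚ (algebraMap (𝓞 M) M α - γ (algebraMap (𝓞 M) M α))|
      ≤ (Ideal.absNorm I : ℚ) := by
  set x : M := algebraMap (𝓞 M) M α with hx
  -- Step 1: absNorm of the span divides absNorm I
  have hdvd : Ideal.absNorm (Ideal.span {(2 * α + 1) ^ 2}) ∣ Ideal.absNorm I :=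
    Ideal.absNorm_dvd_absNorm_of_le hIα
  have hIne : Ideal.absNorm I ≠ 0 := by
    rw [Ne, Ideal.absNorm_eq_zero_iff]; exact hI
  have hle1 : Ideal.absNorm (Ideal.span {(2 * α + 1) ^ 2}) ≤ Ideal.absNorm I :=
    Nat.le_of_dvd (Nat.pos_of_ne_zero hIne) hdvd
  -- Step 2: absNorm of the span equals |N ℚ ((2x+1)^2)|
  have hspan : (Ideal.absNorm (Ideal.span {(2 * α + 1) ^ 2}) : ℚ)
      = |Algebra.norm ℚ ((2 * x + 1) ^ 2)| := by
    rw [Ideal.absNorm_span_singleton]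
    have hcoe : (algebraMap (𝓞 M) M) ((2 * α + 1) ^ 2) = (2 * x + 1) ^ 2 := by
      rw [map_pow, map_add, map_mul, map_one, map_ofNat]
    rw [← hcoe, ← Algebra.coe_norm_int]
    push_cast [Nat.cast_natAbs]
    norm_cast
  -- Step 3: the key inequality
  have key : |Algebra.norm ℚ (x - γ x)| ≤ |Algebra.norm ℚ ((2 * x + 1) ^ 2)| := by
    -- N((2x+1)^2) and N((2x+1) * γ(2x+1)) agree
    have hnormγ : Algebra.norm ℚ ((2 * x + 1) * γ (2 * x + 1))
        = Algebra.norm ℚ ((2 * x + 1) ^ 2) := by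
      rw [map_mul, Algebra.norm_eq_of_algEquiv γ, map_pow]
      ring
    rw [← hnormγ]
    have := abs_norm_eq_prod (x - γ x)
    rw [← Rat.cast_le (K := ℝ)]
    rw [abs_norm_eq_prod, abs_norm_eq_prod]
    apply Finset.prod_le_prod (fun σ _ => by positivity)
    intro σ _
    -- factorwise
    have him : ∀ y, (σ.toRingHom y).im = 0 := htr σ.toRingHom
    set a : ℝ := realEmbOf σ.toRingHom him x with ha
    set b : ℝ := realEmbOf σ.toRingHom him (γ x) with hb
    have ha1 : 1 < a := hα (realEmbOf σ.toRingHom him)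
    have hb1 : 1 < b := by
      have : (realEmbOf σ.toRingHom him).comp (γ : M →+* M)
          = realEmbOf (σ.toRingHom.comp (γ : M →+* M)) (htr _) := by
        ext y; rfl
      have h2 := hα ((realEmbOf σ.toRingHom him).comp (γ : M →+* M))
      rw [RingHom.comp_apply] at h2
      simpa [hb] using h2
    have eσx : σ x = ((a : ℝ) : ℂ) := realEmbOf_spec σ.toRingHom him x
    have eσγx : σ (γ x) = ((b : ℝ) : ℂ) := realEmbOf_spec σ.toRingHom him (γ x)
    have e1 : σ (x - γ x) = (((a - b : ℝ)) : ℂ) := by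
      rw [map_sub, eσx, eσγx]; push_cast; ring
    have e2 : σ ((2 * x + 1) * γ (2 * x + 1)) = (((2*a+1)*(2*b+1) : ℝ) : ℂ) := by
      have : γ (2 * x + 1) = 2 * γ x + 1 := by
        rw [map_add, map_mul, map_one, map_ofNat]
      rw [map_mul, this, map_add, map_add, map_mul, map_mul, map_one, map_ofNat,
        eσx, eσγx]
      push_cast; ring
    rw [e1, e2, Complex.norm_real, Complex.norm_real, Real.norm_eq_abs, Real.norm_eq_abs,
      abs_of_pos (show (0:ℝ) < (2 * a + 1) * (2 * b + 1) by nlinarith)]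
    exact abs_le.mpr ⟨by nlinarith, by nlinarith⟩
  calc |Algebra.norm ℚ (x - γ x)| ≤ |Algebra.norm ℚ ((2 * x + 1) ^ 2)| := key
    _ = (Ideal.absNorm (Ideal.span {(2 * α + 1) ^ 2}) : ℚ) := hspan.symm
    _ ≤ (Ideal.absNorm I : ℚ) := by exact_mod_cast hle1
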